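/- The Lie algebra 𝔤 decomposes as 𝔤 = 𝔥 ⊕ 𝔤⁺ with 𝔤⁺ = 𝔤⁺_B + 𝔤⁺_C, where 𝔥 = span{h_1,...,h_n}, 𝔤⁺_B is the Lie subalgebra generated by x_1,...,x_n, and 𝔤⁺_C is the Lie subalgebra generated by x_1,...,x_{n-1},x'_n. In particular [𝔤⁺_B, x'_n] ⊆ 𝔤⁺_B + 𝔤⁺_C and [𝔤⁺_C, x_n] ⊆ 𝔤⁺_B + 𝔤⁺_C. -/

import Mathlib

/-! We work with N = n + 2 vertices (so the paper's `n` is `n + 2`, covering all n ≥ 2).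
Generators: `Sum.inl i` is x_i, `Sum.inr (Sum.inl i)` is h_i, `Sum.inr (Sum.inr ())` is x'_n,
all 0-indexed (the paper's index i corresponds to i - 1). -/

/-- The free complex Lie algebra on the generators x_1,…,x_N, h_1,…,h_N, x'_N. -/
abbrev FL (n : ℕ) : Type :=
  FreeLieAlgebra ℂ (Fin (n + 2) ⊕ (Fin (n + 2) ⊕ Unit))

/-- The generator x_i. -/
noncomputable def Xg {n : ℕ} (i : Fin (n + 2)) : FL n :=
  FreeLieAlgebra.of ℂ (Sum.inl i)

/-- The generator h_i. -/
noncomputable def Hg {n : ℕ} (i : Fin (n + 2)) : FL n :=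
  FreeLieAlgebra.of ℂ (Sum.inr (Sum.inl i))

/-- The generator x'_n. -/
noncomputable def Xg' (n : ℕ) : FL n :=
  FreeLieAlgebra.of ℂ (Sum.inr (Sum.inr ()))

/-- The coefficients of the type-B relations (B2): [h_i,x_j] = aB i j • x_j. -/
def aB (n : ℕ) (i j : Fin (n + 2)) : ℂ :=
  if i = j then 2
  else if i.val = n + 1 ∧ j.val = n then -2
  else if i.val + 1 = j.val ∨ j.val + 1 = i.val then -1
  else 0

/-- The coefficients of the type-C relations (C2): [h'_i,x'_j] = aC i j • x'_j. -/
def aC (n : ℕ) (i j : Fin (n + 2)) : ℂ :=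
  if i = j then 2
  else if i.val = n ∧ j.val = n + 1 then -2
  else if (i.val + 1 = j.val ∨ j.val + 1 = i.val) ∧ j.val ≠ n + 1 then -1
  else 0

/-- The generator x'_i of the type-C Borel: x'_i = x_i for i < N, x'_N = x'_n. -/
noncomputable def xC {n : ℕ} (i : Fin (n + 2)) : FL n :=
  if i.val = n + 1 then Xg' n else Xg i

/-- The generator h'_i of the type-C Borel: h'_i = h_i for i < N, h'_N = (1/2)h_N. -/
noncomputable def hC {n : ℕ} (i : Fin (n + 2)) : FL n :=
  if i.val = n + 1 then (2 : ℂ)⁻¹ • Hg i else Hg i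

/-- The Serre relations (B3) among the x_i (for i ≠ j). -/
noncomputable def serreB {n : ℕ} (i j : Fin (n + 2)) : FL n :=
  if i.val = n + 1 ∧ j.val = n then ⁅Xg i, ⁅Xg i, ⁅Xg i, Xg j⁆⁆⁆
  else if i.val + 1 = j.val ∨ j.val + 1 = i.val then ⁅Xg i, ⁅Xg i, Xg j⁆⁆
  else ⁅Xg i, Xg j⁆

/-- The Serre relations (C3) among the x'_i (for i ≠ j). -/
noncomputable def serreC {n : ℕ} (i j : Fin (n + 2)) : FL n :=
  if i.val = n ∧ j.val = n + 1 then ⁅xC i, ⁅xC i, ⁅xC i, xC j⁆⁆⁆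
  else if (i.val + 1 = j.val ∨ j.val + 1 = i.val) ∧ j.val ≠ n + 1 then ⁅xC i, ⁅xC i, xC j⁆⁆
  else ⁅xC i, xC j⁆

/-- The set of relations (BC1), (BC2), (BC3) of the Lie algebra 𝔤 of type BC⁺. -/
noncomputable def RelBC (n : ℕ) : Set (FL n) :=
  (Set.range fun p : Fin (n + 2) × Fin (n + 2) => ⁅Hg p.1, Hg p.2⁆) ∪
  (Set.range fun p : Fin (n + 2) × Fin (n + 2) =>
    ⁅Hg p.1, Xg p.2⁆ - aB n p.1 p.2 • Xg p.2) ∪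
  (Set.range fun p : {q : Fin (n + 2) × Fin (n + 2) // q.1 ≠ q.2} =>
    serreB p.1.1 p.1.2) ∪
  (Set.range fun p : Fin (n + 2) × Fin (n + 2) => ⁅hC p.1, hC p.2⁆) ∪
  (Set.range fun p : Fin (n + 2) × Fin (n + 2) =>
    ⁅hC p.1, xC p.2⁆ - aC n p.1 p.2 • xC p.2) ∪
  (Set.range fun p : {q : Fin (n + 2) × Fin (n + 2) // q.1 ≠ q.2} =>
    serreC p.1.1 p.1.2) ∪
  {⁅Xg (⟨n + 1, by omega⟩ : Fin (n + 2)), Xg' n⁆,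
   ⁅⁅Xg (⟨n, by omega⟩ : Fin (n + 2)), Xg (⟨n + 1, by omega⟩ : Fin (n + 2))⁆, Xg' n⁆}

/-- The Lie ideal of the free Lie algebra generated by the relations. -/
noncomputable def IdBC (n : ℕ) : LieIdeal ℂ (FL n) :=
  LieSubmodule.lieSpan ℂ (FL n) (RelBC n)

/-- The Lie algebra 𝔤 of type BC⁺, presented by generators and relations. -/
abbrev gBC (n : ℕ) : Type := FL n ⧸ IdBC n

/-- The image of x_i in 𝔤. -/
noncomputable def xg {n : ℕ} (i : Fin (n + 2)) : gBC n :=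
  LieSubmodule.Quotient.mk (N := IdBC n) (Xg i)

/-- The image of h_i in 𝔤. -/
noncomputable def hg {n : ℕ} (i : Fin (n + 2)) : gBC n :=
  LieSubmodule.Quotient.mk (N := IdBC n) (Hg i)

/-- The image of x'_n in 𝔤. -/
noncomputable def xg' (n : ℕ) : gBC n :=
  LieSubmodule.Quotient.mk (N := IdBC n) (Xg' n)

/-- The subspace 𝔥 = span{h_1,…,h_N} of 𝔤. -/
noncomputable def hSpan (n : ℕ) : Submodule ℂ (gBC n) :=
  Submodule.span ℂ (Set.range (hg (n := n)))

/-- The Lie subalgebra 𝔤⁺ of 𝔤 generated by x_1,…,x_N,x'_N. -/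
noncomputable def gPlus (n : ℕ) : LieSubalgebra ℂ (gBC n) :=
  LieSubalgebra.lieSpan ℂ (gBC n) (Set.range (xg (n := n)) ∪ {xg' n})

/-- The Lie subalgebra 𝔤⁺_B of 𝔤 generated by x_1,…,x_N. -/
noncomputable def gPlusB (n : ℕ) : LieSubalgebra ℂ (gBC n) :=
  LieSubalgebra.lieSpan ℂ (gBC n) (Set.range (xg (n := n)))

/-- The Lie subalgebra 𝔤⁺_C of 𝔤 generated by x_1,…,x_{N-1},x'_N. -/
noncomputable def gPlusC (n : ℕ) : LieSubalgebra ℂ (gBC n) :=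
  LieSubalgebra.lieSpan ℂ (gBC n)
    ({y | ∃ i : Fin (n + 2), i.val ≠ n + 1 ∧ y = xg i} ∪ {xg' n})

section Aux
variable {n : ℕ}

/-- Shorthand for the generator y = x_N. -/
noncomputable def yg (n : ℕ) : gBC n := xg ⟨n + 1, by omega⟩

private lemma qrel {r : FL n} (h : r ∈ RelBC n) :
    (LieSubmodule.Quotient.mk (N := IdBC n) r) = 0 :=
  LieSubmodule.Quotient.mk_eq_zero'.mpr (LieSubmodule.subset_lieSpan h)

private lemma qsub (a b : FL n) :
    (LieSubmodule.Quotient.mk (N := IdBC n) (a - b)) =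
      LieSubmodule.Quotient.mk (N := IdBC n) a - LieSubmodule.Quotient.mk (N := IdBC n) b :=
  Submodule.Quotient.mk_sub _

private lemma qsmul (c : ℂ) (a : FL n) :
    (LieSubmodule.Quotient.mk (N := IdBC n) (c • a)) =
      c • LieSubmodule.Quotient.mk (N := IdBC n) a :=
  Submodule.Quotient.mk_smul _ _ _

private lemma mem1 {r : FL n} (h : r ∈ Set.range fun p : Fin (n + 2) × Fin (n + 2) => ⁅Hg p.1, Hg p.2⁆) : r ∈ RelBC n := by
  unfold RelBC
  exact Set.mem_union_left _ (Set.mem_union_left _ (Set.mem_union_left _ (Set.mem_union_left _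
    (Set.mem_union_left _ (Set.mem_union_left _ h)))))

private lemma mem2 {r : FL n} (h : r ∈ Set.range fun p : Fin (n + 2) × Fin (n + 2) =>
    ⁅Hg p.1, Xg p.2⁆ - aB n p.1 p.2 • Xg p.2) : r ∈ RelBC n := by
  unfold RelBC
  exact Set.mem_union_left _ (Set.mem_union_left _ (Set.mem_union_left _ (Set.mem_union_left _
    (Set.mem_union_left _ (Set.mem_union_right _ h)))))

private lemma mem3 {r : FL n} (h : r ∈ Set.range fun p : {q : Fin (n + 2) × Fin (n + 2) // q.1 ≠ q.2} =>
    serreB p.1.1 p.1.2) : r ∈ RelBC n := by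
  unfold RelBC
  exact Set.mem_union_left _ (Set.mem_union_left _ (Set.mem_union_left _ (Set.mem_union_left _
    (Set.mem_union_right _ h))))

private lemma mem5 {r : FL n} (h : r ∈ Set.range fun p : Fin (n + 2) × Fin (n + 2) =>
    ⁅hC p.1, xC p.2⁆ - aC n p.1 p.2 • xC p.2) : r ∈ RelBC n := by
  unfold RelBC
  exact Set.mem_union_left _ (Set.mem_union_left _ (Set.mem_union_right _ h))

private lemma mem6 {r : FL n} (h : r ∈ Set.range fun p : {q : Fin (n + 2) × Fin (n + 2) // q.1 ≠ q.2} =>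
    serreC p.1.1 p.1.2) : r ∈ RelBC n := by
  unfold RelBC
  exact Set.mem_union_left _ (Set.mem_union_right _ h)

private lemma mem7 {r : FL n}
    (h : r ∈ ({⁅Xg (⟨n + 1, by omega⟩ : Fin (n + 2)), Xg' n⁆,
      ⁅⁅Xg (⟨n, by omega⟩ : Fin (n + 2)), Xg (⟨n + 1, by omega⟩ : Fin (n + 2))⁆, Xg' n⁆} : Set (FL n))) :
    r ∈ RelBC n := by
  unfold RelBC
  exact Set.mem_union_right _ h

/-- (BC1) in the quotient. -/
lemma rel_hh (i j : Fin (n + 2)) : (⁅hg i, hg j⁆ : gBC n) = 0 :=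
  qrel (mem1 ⟨(i, j), rfl⟩)

/-- (BC2-B) in the quotient. -/
lemma rel_hx (i j : Fin (n + 2)) : (⁅hg i, xg j⁆ : gBC n) = aB n i j • xg j := by
  have h0 : LieSubmodule.Quotient.mk (N := IdBC n) (⁅Hg i, Xg j⁆ - aB n i j • Xg j) = 0 :=
    qrel (mem2 ⟨(i, j), rfl⟩)
  rw [qsub, qsmul, sub_eq_zero] at h0
  exact h0

/-- Commuting Serre relation for far-apart x's (includes x_i vs y for i ≤ n-1). -/
lemma xx_far {i j : Fin (n + 2)} (h : i.val + 2 ≤ j.val ∨ j.val + 2 ≤ i.val) :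
    (⁅xg i, xg j⁆ : gBC n) = 0 := by
  have hne : i ≠ j := by
    intro he; subst he; omega
  have h0 : LieSubmodule.Quotient.mk (N := IdBC n) (serreB i j) = 0 :=
    qrel (mem3 ⟨⟨(i, j), hne⟩, rfl⟩)
  have c1 : ¬(i.val = n + 1 ∧ j.val = n) := by omega
  have c2 : ¬(i.val + 1 = j.val ∨ j.val + 1 = i.val) := by omega
  unfold serreB at h0
  rw [if_neg c1, if_neg c2] at h0
  exact h0

/-- Adjacent Serre relation [x_i,[x_i,x_j]] = 0 for i not the last node. -/
lemma xx_serre {i j : Fin (n + 2)} (hadj : i.val + 1 = j.val ∨ j.val + 1 = i.val)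
    (hi : i.val ≠ n + 1) : (⁅xg i, ⁅xg i, xg j⁆⁆ : gBC n) = 0 := by
  have hne : i ≠ j := by
    intro he; subst he; omega
  have h0 : LieSubmodule.Quotient.mk (N := IdBC n) (serreB i j) = 0 :=
    qrel (mem3 ⟨⟨(i, j), hne⟩, rfl⟩)
  have c1 : ¬(i.val = n + 1 ∧ j.val = n) := by omega
  unfold serreB at h0
  rw [if_neg c1, if_pos hadj] at h0
  exact h0

/-- [x_i, x'] = 0 for i ≤ n - 1. -/
lemma xz_far {i : Fin (n + 2)} (hi : i.val < n) : (⁅xg i, xg' n⁆ : gBC n) = 0 := by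
  have hv : ((⟨n + 1, by omega⟩ : Fin (n + 2)) : ℕ) = n + 1 := rfl
  have hne : i ≠ (⟨n + 1, by omega⟩ : Fin (n + 2)) := by
    intro he
    rw [he] at hi
    omega
  have h0 : LieSubmodule.Quotient.mk (N := IdBC n) (serreC i ⟨n + 1, by omega⟩) = 0 :=
    qrel (mem6 ⟨⟨(i, ⟨n + 1, by omega⟩), hne⟩, rfl⟩)
  have c1 : ¬(i.val = n ∧ ((⟨n + 1, by omega⟩ : Fin (n + 2)) : ℕ) = n + 1) := by
    rw [hv]; omega
  have c2 : ¬((i.val + 1 = ((⟨n + 1, by omega⟩ : Fin (n + 2)) : ℕ) ∨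
      ((⟨n + 1, by omega⟩ : Fin (n + 2)) : ℕ) + 1 = i.val) ∧
      ((⟨n + 1, by omega⟩ : Fin (n + 2)) : ℕ) ≠ n + 1) := by
    rw [hv]; omega
  unfold serreC at h0
  rw [if_neg c1, if_neg c2] at h0
  unfold xC at h0
  rw [if_neg (by rw [show (i : ℕ) = i.val from rfl]; omega), if_pos hv] at h0
  exact h0

/-- [h_i, x'] is a multiple of x'. -/
lemma hz_scal (i : Fin (n + 2)) : ∃ c : ℂ, (⁅hg i, xg' n⁆ : gBC n) = c • xg' n := by
  have hv : ((⟨n + 1, by omega⟩ : Fin (n + 2)) : ℕ) = n + 1 := rfl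
  have h0 : LieSubmodule.Quotient.mk (N := IdBC n)
      (⁅hC i, xC ⟨n + 1, by omega⟩⁆ - aC n i ⟨n + 1, by omega⟩ • xC ⟨n + 1, by omega⟩) = 0 :=
    qrel (mem5 ⟨(i, ⟨n + 1, by omega⟩), rfl⟩)
  unfold hC xC at h0
  rw [if_pos hv] at h0
  by_cases hi : i.val = n + 1
  · rw [if_pos hi, smul_lie, qsub, qsmul, qsmul, sub_eq_zero] at h0
    rw [show LieSubmodule.Quotient.mk (N := IdBC n) ⁅Hg i, Xg' n⁆ = ⁅hg i, xg' n⁆ from rfl,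
      show LieSubmodule.Quotient.mk (N := IdBC n) (Xg' n) = xg' n from rfl] at h0
    refine ⟨2 * aC n i ⟨n + 1, by omega⟩, ?_⟩
    calc (⁅hg i, xg' n⁆ : gBC n) = ((2 : ℂ) * 2⁻¹) • ⁅hg i, xg' n⁆ := by norm_num
      _ = (2 : ℂ) • ((2 : ℂ)⁻¹ • ⁅hg i, xg' n⁆) := mul_smul _ _ _
      _ = (2 : ℂ) • (aC n i ⟨n + 1, by omega⟩ • xg' n) := by rw [h0]
      _ = ((2 : ℂ) * aC n i ⟨n + 1, by omega⟩) • xg' n := (mul_smul _ _ _).symm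
  · rw [if_neg hi, qsub, qsmul, sub_eq_zero] at h0
    exact ⟨aC n i ⟨n + 1, by omega⟩, h0⟩

/-- [y, x'] = 0. -/
lemma yz_rel : (⁅yg n, xg' n⁆ : gBC n) = 0 :=
  qrel (mem7 (Set.mem_insert _ _))

/-- [[x_{N-1}, y], x'] = 0. -/
lemma uz_rel : (⁅⁅xg (⟨n, by omega⟩ : Fin (n + 2)), yg n⁆, xg' n⁆ : gBC n) = 0 :=
  qrel (mem7 (Set.mem_insert_of_mem _ rfl))

end Aux
section Aux2
variable {n : ℕ}

/-- The chain u_0 = y, u_{j+1} = [x_{n-j}, u_j]. -/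
noncomputable def uch (n : ℕ) : ℕ → gBC n
  | 0 => yg n
  | (j + 1) => ⁅xg (⟨n - j, by omega⟩ : Fin (n + 2)), uch n j⁆

private lemma ABC : ∀ j : ℕ,
    (∀ i : Fin (n + 2), i.val ≤ n → i.val + j ≠ n → ⁅xg i, uch n j⁆ = 0) ∧
    (j ≤ n → ⁅xg (⟨n - j, by omega⟩ : Fin (n + 2)), uch n (j + 1)⁆ = 0) ∧
    (j + 1 ≤ n → ⁅xg (⟨n - j, by omega⟩ : Fin (n + 2)), uch n (j + 2)⁆ = 0) := by
  intro j
  induction j using Nat.strong_induction_on with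
  | _ j ih =>
  have hA : ∀ i : Fin (n + 2), i.val ≤ n → i.val + j ≠ n → ⁅xg i, uch n j⁆ = 0 := by
    cases j with
    | zero =>
      intro i hi hij
      exact xx_far (j := (⟨n + 1, by omega⟩ : Fin (n + 2))) (Or.inl (show i.val + 2 ≤ n + 1 by omega))
    | succ j' =>
      intro i hi hij
      by_cases hsat : n + 1 ≤ j'
      · have h0 : uch n (j' + 1) = 0 := by
          show ⁅xg (⟨n - j', by omega⟩ : Fin (n + 2)), uch n j'⁆ = 0
          exact (ih j' (by omega)).1 ⟨n - j', by omega⟩ (show n - j' ≤ n by omega)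
            (show n - j' + j' ≠ n by omega)
        rw [h0, lie_zero]
      · by_cases h1 : i.val = n - j'
        · have hieq : i = (⟨n - j', by omega⟩ : Fin (n + 2)) := Fin.ext h1
          rw [hieq]
          exact (ih j' (by omega)).2.1 (by omega)
        · by_cases h2 : i.val = n - j' + 1
          · obtain ⟨j'', rfl⟩ : ∃ j'', j' = j'' + 1 := ⟨j' - 1, by omega⟩
            have hieq : i = (⟨n - j'', by omega⟩ : Fin (n + 2)) := Fin.ext (by
              show i.val = n - j''
              omega)
            rw [hieq]
            exact (ih j'' (by omega)).2.2 (by omega)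
          · rw [show uch n (j' + 1) = ⁅xg (⟨n - j', by omega⟩ : Fin (n + 2)), uch n j'⁆ from rfl,
              leibniz_lie,
              xx_far (j := (⟨n - j', by omega⟩ : Fin (n + 2)))
                (show i.val + 2 ≤ n - j' ∨ n - j' + 2 ≤ i.val by omega),
              (ih j' (by omega)).1 i hi (show i.val + j' ≠ n by omega),
              zero_lie, lie_zero, add_zero]
  have hB : j ≤ n → ⁅xg (⟨n - j, by omega⟩ : Fin (n + 2)), uch n (j + 1)⁆ = 0 := by
    cases j with
    | zero =>
      intro _
      exact xx_serre (j := (⟨n + 1, by omega⟩ : Fin (n + 2)))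
        (Or.inl (show n - 0 + 1 = n + 1 by omega)) (show n - 0 ≠ n + 1 by omega)
    | succ j' =>
      intro hjn
      set a : gBC n := xg (⟨n - (j' + 1), by omega⟩ : Fin (n + 2)) with ha
      set b : gBC n := xg (⟨n - j', by omega⟩ : Fin (n + 2)) with hb
      have hav : ⁅a, uch n j'⁆ = 0 :=
        (ih j' (by omega)).1 ⟨n - (j' + 1), by omega⟩ (show n - (j' + 1) ≤ n by omega)
          (show n - (j' + 1) + j' ≠ n by omega)
      have hserre : ⁅a, ⁅a, b⁆⁆ = 0 :=
        xx_serre (Or.inl (show n - (j' + 1) + 1 = n - j' by omega))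
          (show n - (j' + 1) ≠ n + 1 by omega)
      have e1 : ⁅a, uch n (j' + 1)⁆ = ⁅⁅a, b⁆, uch n j'⁆ := by
        show ⁅a, ⁅b, uch n j'⁆⁆ = _
        rw [leibniz_lie, hav, lie_zero, add_zero]
      show ⁅a, uch n (j' + 2)⁆ = 0
      rw [show uch n (j' + 2) = ⁅a, uch n (j' + 1)⁆ from rfl, e1, leibniz_lie, hserre, hav,
        zero_lie, lie_zero, add_zero]
  refine ⟨hA, hB, ?_⟩
  intro hj1
  set b : gBC n := xg (⟨n - j, by omega⟩ : Fin (n + 2)) with hb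
  set a : gBC n := xg (⟨n - (j + 1), by omega⟩ : Fin (n + 2)) with ha
  have hbt : ⁅b, uch n (j + 1)⁆ = 0 := hB (by omega)
  have hav : ⁅a, uch n j⁆ = 0 :=
    hA ⟨n - (j + 1), by omega⟩ (show n - (j + 1) ≤ n by omega) (show n - (j + 1) + j ≠ n by omega)
  have hserre : ⁅b, ⁅b, a⁆⁆ = 0 :=
    xx_serre (Or.inr (show n - (j + 1) + 1 = n - j by omega)) (show n - j ≠ n + 1 by omega)
  have e1 : ⁅b, uch n (j + 2)⁆ = ⁅⁅b, a⁆, uch n (j + 1)⁆ := by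
    rw [show uch n (j + 2) = ⁅a, uch n (j + 1)⁆ from rfl, leibniz_lie, hbt, lie_zero, add_zero]
  have e2 : ⁅⁅b, a⁆, uch n j⁆ = - uch n (j + 2) := by
    rw [lie_lie, hav, lie_zero, zero_sub]
    rw [show uch n (j + 2) = ⁅a, uch n (j + 1)⁆ from rfl]
    rw [show uch n (j + 1) = ⁅b, uch n j⁆ from rfl]
  have e3 : ⁅⁅b, a⁆, b⁆ = 0 := by
    rw [← lie_skew, hserre, neg_zero]
  have e4 : ⁅b, uch n (j + 2)⁆ = - ⁅b, uch n (j + 2)⁆ := by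
    calc ⁅b, uch n (j + 2)⁆ = ⁅⁅b, a⁆, uch n (j + 1)⁆ := e1
      _ = ⁅⁅b, a⁆, ⁅b, uch n j⁆⁆ := by rw [show uch n (j + 1) = ⁅b, uch n j⁆ from rfl]
      _ = ⁅⁅⁅b, a⁆, b⁆, uch n j⁆ + ⁅b, ⁅⁅b, a⁆, uch n j⁆⁆ := leibniz_lie _ _ _
      _ = ⁅b, - uch n (j + 2)⁆ := by rw [e3, zero_lie, e2, zero_add]
      _ = - ⁅b, uch n (j + 2)⁆ := lie_neg _ _
  have e5 : (2 : ℂ) • ⁅b, uch n (j + 2)⁆ = 0 := by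
    rw [two_smul]
    nth_rewrite 1 [e4]
    rw [neg_add_cancel]
  rcases smul_eq_zero.mp e5 with h | h
  · norm_num at h
  · exact h

private lemma uch_zero {j : ℕ} (hj : n + 2 ≤ j) : uch n j = 0 := by
  obtain ⟨j', rfl⟩ : ∃ j', j = j' + 1 := ⟨j - 1, by omega⟩
  show ⁅xg (⟨n - j', by omega⟩ : Fin (n + 2)), uch n j'⁆ = 0
  exact (ABC j').1 ⟨n - j', by omega⟩ (show n - j' ≤ n by omega) (show n - j' + j' ≠ n by omega)

private lemma uch_z : ∀ j : ℕ, (⁅uch n j, xg' n⁆ : gBC n) = 0 := by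
  intro j
  induction j using Nat.strong_induction_on with
  | _ j ih =>
  match j with
  | 0 => exact yz_rel
  | 1 => exact uz_rel
  | (j + 2) =>
    by_cases hsat : n ≤ j
    · rw [uch_zero (by omega), zero_lie]
    · rw [show uch n (j + 2) = ⁅xg (⟨n - (j + 1), by omega⟩ : Fin (n + 2)), uch n (j + 1)⁆ from rfl,
        lie_lie, ih (j + 1) (by omega), lie_zero,
        xz_far (show n - (j + 1) < n by omega), lie_zero, sub_zero]

private lemma uch_h (i : Fin (n + 2)) : ∀ j : ℕ, ∃ c : ℂ, (⁅hg i, uch n j⁆ : gBC n) = c • uch n j := by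
  intro j
  induction j with
  | zero => exact ⟨aB n i ⟨n + 1, by omega⟩, rel_hx i ⟨n + 1, by omega⟩⟩
  | succ j ihj =>
    obtain ⟨c, hc⟩ := ihj
    refine ⟨aB n i ⟨n - j, by omega⟩ + c, ?_⟩
    rw [show uch n (j + 1) = ⁅xg (⟨n - j, by omega⟩ : Fin (n + 2)), uch n j⁆ from rfl,
      leibniz_lie, hc, rel_hx, lie_smul, smul_lie, ← add_smul]

/-- Iterated ad-words from x' under x_i (i ≤ n), h_i, x'. -/
inductive WJp (n : ℕ) : gBC n → Prop
  | base : WJp n (xg' n)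
  | adx (i : Fin (n + 2)) (hi : i.val ≤ n) {w : gBC n} : WJp n w → WJp n ⁅xg i, w⁆
  | adh (i : Fin (n + 2)) {w : gBC n} : WJp n w → WJp n ⁅hg i, w⁆
  | adz {w : gBC n} : WJp n w → WJp n ⁅xg' n, w⁆

/-- Iterated ad-words from y under x_i (i ≤ n), h_i, y. -/
inductive WJb (n : ℕ) : gBC n → Prop
  | base : WJb n (yg n)
  | adx (i : Fin (n + 2)) (hi : i.val ≤ n) {w : gBC n} : WJb n w → WJb n ⁅xg i, w⁆
  | adh (i : Fin (n + 2)) {w : gBC n} : WJb n w → WJb n ⁅hg i, w⁆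
  | ady {w : gBC n} : WJb n w → WJb n ⁅yg n, w⁆

private lemma keyU : ∀ m j : ℕ, n + 2 ≤ j + m → ∀ w : gBC n, WJp n w → ⁅uch n j, w⁆ = 0 := by
  intro m
  induction m with
  | zero =>
    intro j hj w _
    rw [uch_zero (by omega), zero_lie]
  | succ m ihm =>
    intro j hj w hw
    induction hw with
    | base => exact uch_z j
    | adx i hi hw' ihw =>
      rw [leibniz_lie, ihw, lie_zero, add_zero]
      by_cases hin : i.val + j = n
      · have hieq : i = (⟨n - j, by omega⟩ : Fin (n + 2)) := Fin.ext (by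
          show i.val = n - j
          omega)
        have h1 : ⁅uch n j, xg i⁆ = - uch n (j + 1) := by
          rw [hieq, ← lie_skew]
          rfl
        rw [h1, neg_lie, ihm (j + 1) (by omega) _ (by assumption), neg_zero]
      · have h1 : (⁅uch n j, xg i⁆ : gBC n) = 0 := by
          rw [← lie_skew, (ABC j).1 i hi hin, neg_zero]
        rw [h1, zero_lie]
    | adh i hw' ihw =>
      rw [leibniz_lie, ihw, lie_zero, add_zero]
      obtain ⟨c, hc⟩ := uch_h i j
      have h1 : (⁅uch n j, hg i⁆ : gBC n) = -(c • uch n j) := by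
        rw [← lie_skew, hc]
      rw [h1, neg_lie, smul_lie, ihw, smul_zero, neg_zero]
    | adz hw' ihw =>
      rw [leibniz_lie, ihw, lie_zero, add_zero, uch_z j, zero_lie]

private lemma keyZ : ∀ w : gBC n, WJb n w → ∀ w' : gBC n, WJp n w' → ⁅w, w'⁆ = 0 := by
  intro w hw
  induction hw with
  | base =>
    intro w' hw'
    exact keyU (n + 2) 0 (by omega) w' hw'
  | adx i hi hw0 ihw =>
    intro w' hw'
    rw [lie_lie, ihw w' hw', ihw _ (WJp.adx i hi hw')]
    simp
  | adh i hw0 ihw =>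
    intro w' hw'
    rw [lie_lie, ihw w' hw', ihw _ (WJp.adh i hw')]
    simp
  | ady hw0 ihw =>
    intro w' hw'
    have h0 : (⁅yg n, w'⁆ : gBC n) = 0 := keyU (n + 2) 0 (by omega) w' hw'
    rw [lie_lie, ihw w' hw', h0]
    simp

end Aux2
section Aux3
variable {n : ℕ}

/-- The idealizer-style normalizer of a submodule. -/
noncomputable def nz (M : Submodule ℂ (gBC n)) : LieSubalgebra ℂ (gBC n) where
  carrier := {v | ∀ m ∈ M, ⁅v, m⁆ ∈ M}
  add_mem' := by
    intro a b ha hb m hm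
    rw [add_lie]
    exact M.add_mem (ha m hm) (hb m hm)
  zero_mem' := by
    intro m hm
    rw [zero_lie]
    exact M.zero_mem
  smul_mem' := by
    intro c a ha m hm
    rw [smul_lie]
    exact M.smul_mem c (ha m hm)
  lie_mem' := by
    intro a b ha hb m hm
    rw [lie_lie]
    exact M.sub_mem (ha _ (hb m hm)) (hb _ (ha m hm))

lemma mem_nz {M : Submodule ℂ (gBC n)} {v : gBC n} :
    v ∈ nz M ↔ ∀ m ∈ M, ⁅v, m⁆ ∈ M := Iff.rfl

lemma mem_nz_of_gen {v : gBC n} {S : Set (gBC n)}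
    (h : ∀ s ∈ S, ⁅v, s⁆ ∈ Submodule.span ℂ S) : v ∈ nz (Submodule.span ℂ S) := by
  intro m hm
  induction hm using Submodule.span_induction with
  | mem s hs => exact h s hs
  | zero => rw [lie_zero]; exact Submodule.zero_mem _
  | add a b _ _ ha hb => rw [lie_add]; exact Submodule.add_mem _ ha hb
  | smul c a _ ha => rw [lie_smul]; exact Submodule.smul_mem _ c ha

/-- Span of the B-side ad-words. -/
noncomputable def MJb (n : ℕ) : Submodule ℂ (gBC n) := Submodule.span ℂ {w | WJb n w}

/-- Span of the C-side ad-words. -/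
noncomputable def MJp (n : ℕ) : Submodule ℂ (gBC n) := Submodule.span ℂ {w | WJp n w}

/-- The common subalgebra generated by x_0,…,x_n. -/
noncomputable def B0 (n : ℕ) : LieSubalgebra ℂ (gBC n) :=
  LieSubalgebra.lieSpan ℂ (gBC n) {v | ∃ i : Fin (n + 2), i.val ≤ n ∧ v = xg i}

lemma xg_nz_MJb {i : Fin (n + 2)} (hi : i.val ≤ n) : xg i ∈ nz (MJb n) :=
  mem_nz_of_gen (fun s hs => Submodule.subset_span (WJb.adx i hi hs))

lemma hg_nz_MJb (i : Fin (n + 2)) : hg i ∈ nz (MJb n) :=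
  mem_nz_of_gen (fun s hs => Submodule.subset_span (WJb.adh i hs))

lemma yg_nz_MJb : yg n ∈ nz (MJb n) :=
  mem_nz_of_gen (fun s hs => Submodule.subset_span (WJb.ady hs))

lemma xg_nz_MJp {i : Fin (n + 2)} (hi : i.val ≤ n) : xg i ∈ nz (MJp n) :=
  mem_nz_of_gen (fun s hs => Submodule.subset_span (WJp.adx i hi hs))

lemma hg_nz_MJp (i : Fin (n + 2)) : hg i ∈ nz (MJp n) :=
  mem_nz_of_gen (fun s hs => Submodule.subset_span (WJp.adh i hs))

lemma zg_nz_MJp : xg' n ∈ nz (MJp n) :=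
  mem_nz_of_gen (fun s hs => Submodule.subset_span (WJp.adz hs))

lemma B0_nz_MJb : B0 n ≤ nz (MJb n) := by
  rw [B0, LieSubalgebra.lieSpan_le]
  rintro v ⟨i, hi, rfl⟩
  exact xg_nz_MJb hi

lemma B0_nz_MJp : B0 n ≤ nz (MJp n) := by
  rw [B0, LieSubalgebra.lieSpan_le]
  rintro v ⟨i, hi, rfl⟩
  exact xg_nz_MJp hi

lemma WJb_nz : ∀ w : gBC n, WJb n w → w ∈ nz (MJb n) := by
  intro w hw
  induction hw with
  | base => exact yg_nz_MJb
  | adx i hi hw ih => exact (nz (MJb n)).lie_mem (xg_nz_MJb hi) ih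
  | adh i hw ih => exact (nz (MJb n)).lie_mem (hg_nz_MJb i) ih
  | ady hw ih => exact (nz (MJb n)).lie_mem yg_nz_MJb ih

lemma WJp_nz : ∀ w : gBC n, WJp n w → w ∈ nz (MJp n) := by
  intro w hw
  induction hw with
  | base => exact zg_nz_MJp
  | adx i hi hw ih => exact (nz (MJp n)).lie_mem (xg_nz_MJp hi) ih
  | adh i hw ih => exact (nz (MJp n)).lie_mem (hg_nz_MJp i) ih
  | adz hw ih => exact (nz (MJp n)).lie_mem zg_nz_MJp ih

lemma MJb_nz : ∀ m ∈ MJb n, m ∈ nz (MJb n) := by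
  intro m hm
  have : MJb n ≤ (nz (MJb n)).toSubmodule := Submodule.span_le.mpr (fun w hw => WJb_nz w hw)
  exact this hm

lemma MJp_nz : ∀ m ∈ MJp n, m ∈ nz (MJp n) := by
  intro m hm
  have : MJp n ≤ (nz (MJp n)).toSubmodule := Submodule.span_le.mpr (fun w hw => WJp_nz w hw)
  exact this hm

/-- The subalgebra B0 + MJb. -/
noncomputable def KB (n : ℕ) : LieSubalgebra ℂ (gBC n) :=
  { (B0 n).toSubmodule ⊔ MJb n with
    lie_mem' := by
      intro x y hx hy
      obtain ⟨b, hb, m, hm, rfl⟩ := Submodule.mem_sup.mp hx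
      obtain ⟨b', hb', m', hm', rfl⟩ := Submodule.mem_sup.mp hy
      rw [add_lie, lie_add, lie_add]
      refine Submodule.add_mem _ (Submodule.add_mem _ ?t1 ?t2) (Submodule.add_mem _ ?t3 ?t4)
      case t1 => exact Submodule.mem_sup_left ((B0 n).lie_mem hb hb')
      case t2 => exact Submodule.mem_sup_right ((B0_nz_MJb hb) m' hm')
      case t3 =>
        have h1 : (⁅m, b'⁆ : gBC n) = -⁅b', m⁆ := (lie_skew _ _).symm
        rw [h1]
        exact Submodule.neg_mem _ (Submodule.mem_sup_right ((B0_nz_MJb hb') m hm))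
      case t4 => exact Submodule.mem_sup_right ((MJb_nz m hm) m' hm') }

/-- The subalgebra B0 + MJp. -/
noncomputable def KC (n : ℕ) : LieSubalgebra ℂ (gBC n) :=
  { (B0 n).toSubmodule ⊔ MJp n with
    lie_mem' := by
      intro x y hx hy
      obtain ⟨b, hb, m, hm, rfl⟩ := Submodule.mem_sup.mp hx
      obtain ⟨b', hb', m', hm', rfl⟩ := Submodule.mem_sup.mp hy
      rw [add_lie, lie_add, lie_add]
      refine Submodule.add_mem _ (Submodule.add_mem _ ?t1 ?t2) (Submodule.add_mem _ ?t3 ?t4)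
      case t1 => exact Submodule.mem_sup_left ((B0 n).lie_mem hb hb')
      case t2 => exact Submodule.mem_sup_right ((B0_nz_MJp hb) m' hm')
      case t3 =>
        have h1 : (⁅m, b'⁆ : gBC n) = -⁅b', m⁆ := (lie_skew _ _).symm
        rw [h1]
        exact Submodule.neg_mem _ (Submodule.mem_sup_right ((B0_nz_MJp hb') m hm))
      case t4 => exact Submodule.mem_sup_right ((MJp_nz m hm) m' hm') }

/-- h-stability of a Lie span whose generators are h-stable. -/
lemma hstable {S : Set (gBC n)}
    (hgen : ∀ (i : Fin (n + 2)), ∀ s ∈ S, ⁅hg i, s⁆ ∈ LieSubalgebra.lieSpan ℂ (gBC n) S) :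
    ∀ v ∈ LieSubalgebra.lieSpan ℂ (gBC n) S, ∀ i : Fin (n + 2),
      ⁅hg i, v⁆ ∈ LieSubalgebra.lieSpan ℂ (gBC n) S := by
  intro v hv
  set K := LieSubalgebra.lieSpan ℂ (gBC n) S with hK
  suffices h : v ∈ K ∧ ∀ i : Fin (n + 2), ⁅hg i, v⁆ ∈ K by exact h.2
  refine LieSubalgebra.lieSpan_induction (R := ℂ)
    (p := fun v _ => v ∈ K ∧ ∀ i : Fin (n + 2), ⁅hg i, v⁆ ∈ K) ?_ ?_ ?_ ?_ ?_ hv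
  · intro x hx
    exact ⟨LieSubalgebra.subset_lieSpan hx, fun i => hgen i x hx⟩
  · refine ⟨K.zero_mem, fun i => ?_⟩
    rw [lie_zero]
    exact K.zero_mem
  · intro x y _ _ hx hy
    refine ⟨K.add_mem hx.1 hy.1, fun i => ?_⟩
    rw [lie_add]
    exact K.add_mem (hx.2 i) (hy.2 i)
  · intro c x _ hx
    refine ⟨K.smul_mem c hx.1, fun i => ?_⟩
    rw [lie_smul]
    exact K.smul_mem c (hx.2 i)

  · intro x y _ _ hx hy
    refine ⟨K.lie_mem hx.1 hy.1, fun i => ?_⟩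
    rw [leibniz_lie]
    exact K.add_mem (K.lie_mem (hx.2 i) hy.1) (K.lie_mem hx.1 (hy.2 i))

lemma h_gPlusB : ∀ v ∈ gPlusB n, ∀ i : Fin (n + 2), ⁅hg i, v⁆ ∈ gPlusB n := by
  refine hstable ?_
  rintro i s ⟨j, rfl⟩
  rw [rel_hx]
  exact (LieSubalgebra.lieSpan ℂ (gBC n) _).smul_mem _ (LieSubalgebra.subset_lieSpan ⟨j, rfl⟩)

lemma h_gPlusC : ∀ v ∈ gPlusC n, ∀ i : Fin (n + 2), ⁅hg i, v⁆ ∈ gPlusC n := by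
  refine hstable ?_
  rintro i s (⟨j, hj, rfl⟩ | hs)
  · rw [rel_hx]
    exact (LieSubalgebra.lieSpan ℂ (gBC n) _).smul_mem _
      (LieSubalgebra.subset_lieSpan (Or.inl ⟨j, hj, rfl⟩))
  · rw [Set.mem_singleton_iff] at hs
    subst hs
    obtain ⟨c, hc⟩ := hz_scal (n := n) i
    rw [hc]
    exact (LieSubalgebra.lieSpan ℂ (gBC n) _).smul_mem _
      (LieSubalgebra.subset_lieSpan (Or.inr rfl))

lemma h_gPlus : ∀ v ∈ gPlus n, ∀ i : Fin (n + 2), ⁅hg i, v⁆ ∈ gPlus n := by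
  refine hstable ?_
  rintro i s (⟨j, rfl⟩ | hs)
  · rw [rel_hx]
    exact (LieSubalgebra.lieSpan ℂ (gBC n) _).smul_mem _
      (LieSubalgebra.subset_lieSpan (Or.inl ⟨j, rfl⟩))
  · rw [Set.mem_singleton_iff] at hs
    subst hs
    obtain ⟨c, hc⟩ := hz_scal (n := n) i
    rw [hc]
    exact (LieSubalgebra.lieSpan ℂ (gBC n) _).smul_mem _
      (LieSubalgebra.subset_lieSpan (Or.inr rfl))

lemma WJb_le_gPlusB : ∀ w : gBC n, WJb n w → w ∈ gPlusB n := by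
  intro w hw
  induction hw with
  | base => exact LieSubalgebra.subset_lieSpan ⟨⟨n + 1, by omega⟩, rfl⟩
  | adx i hi hw ih => exact (gPlusB n).lie_mem (LieSubalgebra.subset_lieSpan ⟨i, rfl⟩) ih
  | adh i hw ih => exact h_gPlusB _ ih i
  | ady hw ih =>
    exact (gPlusB n).lie_mem (LieSubalgebra.subset_lieSpan ⟨⟨n + 1, by omega⟩, rfl⟩) ih

lemma WJp_le_gPlusC : ∀ w : gBC n, WJp n w → w ∈ gPlusC n := by
  intro w hw
  induction hw with
  | base => exact LieSubalgebra.subset_lieSpan (Or.inr rfl)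
  | adx i hi hw ih =>
    exact (gPlusC n).lie_mem
      (LieSubalgebra.subset_lieSpan (Or.inl ⟨i, by omega, rfl⟩)) ih
  | adh i hw ih => exact h_gPlusC _ ih i
  | adz hw ih => exact (gPlusC n).lie_mem (LieSubalgebra.subset_lieSpan (Or.inr rfl)) ih

lemma MJb_le_gPlusB : MJb n ≤ (gPlusB n).toSubmodule :=
  Submodule.span_le.mpr (fun w hw => WJb_le_gPlusB w hw)

lemma MJp_le_gPlusC : MJp n ≤ (gPlusC n).toSubmodule :=
  Submodule.span_le.mpr (fun w hw => WJp_le_gPlusC w hw)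

lemma B0_le_gPlusB : B0 n ≤ gPlusB n := by
  rw [B0, LieSubalgebra.lieSpan_le]
  rintro v ⟨i, hi, rfl⟩
  exact LieSubalgebra.subset_lieSpan ⟨i, rfl⟩

lemma B0_le_gPlusC : B0 n ≤ gPlusC n := by
  rw [B0, LieSubalgebra.lieSpan_le]
  rintro v ⟨i, hi, rfl⟩
  exact LieSubalgebra.subset_lieSpan (Or.inl ⟨i, by omega, rfl⟩)

lemma gPlusB_le_KB : gPlusB n ≤ KB n := by
  rw [gPlusB, LieSubalgebra.lieSpan_le]
  rintro v ⟨i, rfl⟩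
  by_cases hi : i.val ≤ n
  · exact Submodule.mem_sup_left (LieSubalgebra.subset_lieSpan ⟨i, hi, rfl⟩)
  · have hieq : i = (⟨n + 1, by omega⟩ : Fin (n + 2)) := Fin.ext (show i.val = n + 1 by omega)
    rw [hieq]
    exact Submodule.mem_sup_right (Submodule.subset_span WJb.base)

lemma gPlusC_le_KC : gPlusC n ≤ KC n := by
  rw [gPlusC, LieSubalgebra.lieSpan_le]
  rintro v (⟨i, hi, rfl⟩ | hv)
  · exact Submodule.mem_sup_left (LieSubalgebra.subset_lieSpan ⟨i, by omega, rfl⟩)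
  · rw [Set.mem_singleton_iff] at hv
    subst hv
    exact Submodule.mem_sup_right (Submodule.subset_span WJp.base)

lemma MJ_lie_zero : ∀ m ∈ MJb n, ∀ m' ∈ MJp n, (⁅m, m'⁆ : gBC n) = 0 := by
  intro m hm
  induction hm using Submodule.span_induction with
  | mem w hw =>
    intro m' hm'
    induction hm' using Submodule.span_induction with
    | mem w' hw' => exact keyZ w hw w' hw'
    | zero => rw [lie_zero]
    | add a b _ _ ha hb => rw [lie_add, ha, hb, add_zero]
    | smul c a _ ha => rw [lie_smul, ha, smul_zero]
  | zero => intro m' hm'; rw [zero_lie]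
  | add a b _ _ ha hb => intro m' hm'; rw [add_lie, ha m' hm', hb m' hm', add_zero]
  | smul c a _ ha => intro m' hm'; rw [smul_lie, ha m' hm', smul_zero]

lemma lie_BC_mem {b c : gBC n} (hb : b ∈ gPlusB n) (hc : c ∈ gPlusC n) :
    (⁅b, c⁆ : gBC n) ∈ (gPlusB n).toSubmodule ⊔ (gPlusC n).toSubmodule := by
  obtain ⟨b0, hb0, m, hm, rfl⟩ := Submodule.mem_sup.mp (gPlusB_le_KB hb)
  obtain ⟨c0, hc0, m', hm', rfl⟩ := Submodule.mem_sup.mp (gPlusC_le_KC hc)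
  rw [add_lie, lie_add, lie_add]
  refine Submodule.add_mem _ (Submodule.add_mem _ ?t1 ?t2) (Submodule.add_mem _ ?t3 ?t4)
  case t1 => exact Submodule.mem_sup_left (B0_le_gPlusB ((B0 n).lie_mem hb0 hc0))
  case t2 => exact Submodule.mem_sup_right (MJp_le_gPlusC ((B0_nz_MJp hb0) m' hm'))
  case t3 =>
    have h1 : (⁅m, c0⁆ : gBC n) = -⁅c0, m⁆ := (lie_skew _ _).symm
    rw [h1]
    exact Submodule.neg_mem _ (Submodule.mem_sup_left (MJb_le_gPlusB ((B0_nz_MJb hc0) m hm)))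
  case t4 =>
    rw [MJ_lie_zero m hm m' hm']
    exact Submodule.zero_mem _

/-- The sum gPlusB + gPlusC as a Lie subalgebra. -/
noncomputable def KK (n : ℕ) : LieSubalgebra ℂ (gBC n) :=
  { (gPlusB n).toSubmodule ⊔ (gPlusC n).toSubmodule with
    lie_mem' := by
      intro x y hx hy
      obtain ⟨b, hb, c, hc, rfl⟩ := Submodule.mem_sup.mp hx
      obtain ⟨b', hb', c', hc', rfl⟩ := Submodule.mem_sup.mp hy
      rw [add_lie, lie_add, lie_add]
      refine Submodule.add_mem _ (Submodule.add_mem _ ?t1 ?t2) (Submodule.add_mem _ ?t3 ?t4)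
      case t1 => exact Submodule.mem_sup_left ((gPlusB n).lie_mem hb hb')
      case t2 => exact lie_BC_mem hb hc'
      case t3 =>
        have h1 : (⁅c, b'⁆ : gBC n) = -⁅b', c⁆ := (lie_skew _ _).symm
        rw [h1]
        exact Submodule.neg_mem _ (lie_BC_mem hb' hc)
      case t4 => exact Submodule.mem_sup_right ((gPlusC n).lie_mem hc hc') }

lemma gPlus_le_KK : gPlus n ≤ KK n := by
  rw [gPlus, LieSubalgebra.lieSpan_le]
  rintro v (⟨i, rfl⟩ | hv)
  · exact Submodule.mem_sup_left (LieSubalgebra.subset_lieSpan ⟨i, rfl⟩)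
  · rw [Set.mem_singleton_iff] at hv
    subst hv
    exact Submodule.mem_sup_right (LieSubalgebra.subset_lieSpan (Or.inr rfl))

lemma gPlusB_le_gPlus : gPlusB n ≤ gPlus n := by
  rw [gPlusB, LieSubalgebra.lieSpan_le]
  rintro v ⟨i, rfl⟩
  exact LieSubalgebra.subset_lieSpan (Or.inl ⟨i, rfl⟩)

lemma gPlusC_le_gPlus : gPlusC n ≤ gPlus n := by
  rw [gPlusC, LieSubalgebra.lieSpan_le]
  rintro v (⟨i, hi, rfl⟩ | hv)
  · exact LieSubalgebra.subset_lieSpan (Or.inl ⟨i, rfl⟩)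
  · rw [Set.mem_singleton_iff] at hv
    subst hv
    exact LieSubalgebra.subset_lieSpan (Or.inr rfl)

lemma part3 : (gPlus n).toSubmodule = (gPlusB n).toSubmodule ⊔ (gPlusC n).toSubmodule := by
  apply le_antisymm
  · intro x hx
    exact gPlus_le_KK hx
  · refine sup_le ?_ ?_
    · intro x hx
      exact gPlusB_le_gPlus hx
    · intro x hx
      exact gPlusC_le_gPlus hx

end Aux3
section Aux4
variable {n : ℕ}

lemma hspan_lie_hspan : ∀ a ∈ hSpan n, ∀ b ∈ hSpan n, (⁅a, b⁆ : gBC n) = 0 := by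
  intro a ha
  induction ha using Submodule.span_induction with
  | mem w hw =>
    obtain ⟨i, rfl⟩ := hw
    intro b hb
    induction hb using Submodule.span_induction with
    | mem w' hw' =>
      obtain ⟨j, rfl⟩ := hw'
      exact rel_hh i j
    | zero => rw [lie_zero]
    | add a b _ _ ha hb => rw [lie_add, ha, hb, add_zero]
    | smul c a _ ha => rw [lie_smul, ha, smul_zero]
  | zero => intro b hb; rw [zero_lie]
  | add a b _ _ ha hb => intro b' hb'; rw [add_lie, ha b' hb', hb b' hb', add_zero]
  | smul c a _ ha => intro b' hb'; rw [smul_lie, ha b' hb', smul_zero]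

lemma hspan_lie_gPlus : ∀ a ∈ hSpan n, ∀ v ∈ gPlus n, (⁅a, v⁆ : gBC n) ∈ gPlus n := by
  intro a ha
  induction ha using Submodule.span_induction with
  | mem w hw =>
    obtain ⟨i, rfl⟩ := hw
    intro v hv
    exact h_gPlus v hv i
  | zero => intro v hv; rw [zero_lie]; exact (gPlus n).zero_mem
  | add a b _ _ ha hb =>
    intro v hv
    rw [add_lie]
    exact (gPlus n).add_mem (ha v hv) (hb v hv)
  | smul c a _ ha =>
    intro v hv
    rw [smul_lie]
    exact (gPlus n).smul_mem c (ha v hv)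

/-- The sum hSpan + gPlus as a Lie subalgebra. -/
noncomputable def KM (n : ℕ) : LieSubalgebra ℂ (gBC n) :=
  { hSpan n ⊔ (gPlus n).toSubmodule with
    lie_mem' := by
      intro x y hx hy
      obtain ⟨h, hh, g, hg, rfl⟩ := Submodule.mem_sup.mp hx
      obtain ⟨h', hh', g', hg', rfl⟩ := Submodule.mem_sup.mp hy
      rw [add_lie, lie_add, lie_add]
      refine Submodule.add_mem _ (Submodule.add_mem _ ?t1 ?t2) (Submodule.add_mem _ ?t3 ?t4)
      case t1 =>
        rw [hspan_lie_hspan h hh h' hh']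
        exact Submodule.zero_mem _
      case t2 => exact Submodule.mem_sup_right (hspan_lie_gPlus h hh g' hg')
      case t3 =>
        have h1 : (⁅g, h'⁆ : gBC n) = -⁅h', g⁆ := (lie_skew _ _).symm
        rw [h1]
        exact Submodule.neg_mem _ (Submodule.mem_sup_right (hspan_lie_gPlus h' hh' g hg))
      case t4 => exact Submodule.mem_sup_right ((gPlus n).lie_mem hg hg') }

lemma FL_gen : ∀ v : FL n,
    v ∈ LieSubalgebra.lieSpan ℂ (FL n) (Set.range (FreeLieAlgebra.of ℂ)) := by
  set K := LieSubalgebra.lieSpan ℂ (FL n) (Set.range (FreeLieAlgebra.of ℂ)) with hKdef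
  let F : FL n →ₗ⁅ℂ⁆ K := FreeLieAlgebra.lift ℂ
    (fun x => (⟨FreeLieAlgebra.of ℂ x, LieSubalgebra.subset_lieSpan ⟨x, rfl⟩⟩ : K))
  have hFK : K.incl.comp F = LieHom.id := by
    apply FreeLieAlgebra.hom_ext
    intro x
    show K.incl (F (FreeLieAlgebra.of ℂ x)) = FreeLieAlgebra.of ℂ x
    rw [show F (FreeLieAlgebra.of ℂ x)
        = (⟨FreeLieAlgebra.of ℂ x, LieSubalgebra.subset_lieSpan ⟨x, rfl⟩⟩ : K) from
      FreeLieAlgebra.lift_of_apply _ x]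
    rfl
  intro v
  have h1 : K.incl (F v) = v := by
    have := congrArg (fun (g : FL n →ₗ⁅ℂ⁆ FL n) => g v) hFK
    simpa using this
  rw [← h1]
  exact (F v).2

lemma part1 : hSpan n ⊔ (gPlus n).toSubmodule = ⊤ := by
  rw [eq_top_iff]
  rintro v -
  obtain ⟨w, rfl⟩ := Submodule.Quotient.mk_surjective (IdBC n).toSubmodule v
  let P : LieSubalgebra ℂ (FL n) :=
    { Submodule.comap ((IdBC n).toSubmodule.mkQ) (hSpan n ⊔ (gPlus n).toSubmodule) with
      lie_mem' := by
        intro x y hx hy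
        show LieSubmodule.Quotient.mk (N := IdBC n) ⁅x, y⁆ ∈ hSpan n ⊔ (gPlus n).toSubmodule
        exact (KM n).lie_mem hx hy }
  have hgen : Set.range (FreeLieAlgebra.of ℂ (X := Fin (n + 2) ⊕ (Fin (n + 2) ⊕ Unit))) ⊆ P := by
    rintro w' ⟨t, rfl⟩
    rcases t with i | i | u
    · exact Submodule.mem_sup_right (show xg i ∈ (gPlus n).toSubmodule from LieSubalgebra.subset_lieSpan (Or.inl ⟨i, rfl⟩))
    · exact Submodule.mem_sup_left (Submodule.subset_span ⟨i, rfl⟩)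
    · exact Submodule.mem_sup_right (show xg' n ∈ (gPlus n).toSubmodule from LieSubalgebra.subset_lieSpan (Or.inr rfl))
  exact LieSubalgebra.lieSpan_le.mpr hgen (FL_gen w)

attribute [local instance 100] LieRing.ofAssociativeRing

/-- The abelianization morphism to functions, killing the x's and keeping the h's. -/
noncomputable def phiA (n : ℕ) : FL n →ₗ⁅ℂ⁆ (Fin (n + 2) → ℂ) :=
  FreeLieAlgebra.lift ℂ
    (Sum.elim (fun _ => 0) (Sum.elim (fun i => Pi.single i 1) (fun _ => 0)))

lemma Abrac (a b : Fin (n + 2) → ℂ) : ⁅a, b⁆ = 0 := by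
  rw [LieRing.of_associative_ring_bracket, mul_comm, sub_self]

lemma phi_lie (a b : FL n) : phiA n ⁅a, b⁆ = 0 := by
  rw [LieHom.map_lie, Abrac]

lemma phi_X (i : Fin (n + 2)) : phiA n (Xg i) = 0 :=
  FreeLieAlgebra.lift_of_apply _ (Sum.inl i)

lemma phi_X' : phiA n (Xg' n) = 0 :=
  FreeLieAlgebra.lift_of_apply _ (Sum.inr (Sum.inr ()))

lemma phi_H (i : Fin (n + 2)) : phiA n (Hg i) = Pi.single i 1 :=
  FreeLieAlgebra.lift_of_apply _ (Sum.inr (Sum.inl i))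

lemma phi_xC (i : Fin (n + 2)) : phiA n (xC i) = 0 := by
  unfold xC
  split_ifs
  · exact phi_X'
  · exact phi_X i

lemma phi_rel : ∀ r ∈ RelBC n, phiA n r = 0 := by
  intro r hr
  simp only [RelBC, Set.mem_union, Set.mem_range, Set.mem_insert_iff,
    Set.mem_singleton_iff] at hr
  rcases hr with ((((((⟨p, rfl⟩ | ⟨p, rfl⟩) | ⟨p, rfl⟩) | ⟨p, rfl⟩) | ⟨p, rfl⟩) | ⟨p, rfl⟩) | hr)
  · exact phi_lie _ _
  · rw [map_sub, map_smul, phi_lie, phi_X, smul_zero, sub_zero]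
  · unfold serreB
    split_ifs <;> exact phi_lie _ _
  · exact phi_lie _ _
  · rw [map_sub, map_smul, phi_lie, phi_xC, smul_zero, sub_zero]
  · unfold serreC
    split_ifs <;> exact phi_lie _ _
  · rcases hr with rfl | rfl
    · exact phi_lie _ _
    · exact phi_lie _ _

lemma IdBC_le_ker : (IdBC n).toSubmodule ≤ LinearMap.ker (phiA n).toLinearMap := by
  intro x hx
  have h1 : x ∈ (phiA n).ker := by
    have h2 : IdBC n ≤ (phiA n).ker := by
      rw [IdBC, LieSubmodule.lieSpan_le]
      intro r hr
      exact LieHom.mem_ker.mpr (phi_rel r hr)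
    exact h2 hx
  exact h1

/-- The induced linear map on the quotient. -/
noncomputable def psiA (n : ℕ) : gBC n →ₗ[ℂ] (Fin (n + 2) → ℂ) :=
  Submodule.liftQ (IdBC n).toSubmodule (phiA n).toLinearMap IdBC_le_ker

lemma psi_mk (w : FL n) :
    psiA n (LieSubmodule.Quotient.mk (N := IdBC n) w) = phiA n w := rfl

lemma psi_h (i : Fin (n + 2)) : psiA n (hg i) = Pi.single i 1 := phi_H i

lemma psi_gPlus : ∀ v ∈ gPlus n, psiA n v = 0 := by
  intro v hv
  refine LieSubalgebra.lieSpan_induction (R := ℂ) (p := fun v _ => psiA n v = 0) ?_ ?_ ?_ ?_ ?_ hv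
  · rintro x (⟨i, rfl⟩ | hx)
    · exact phi_X i
    · rw [Set.mem_singleton_iff] at hx
      subst hx
      exact phi_X'
  · exact map_zero _
  · intro x y _ _ hx hy
    rw [map_add, hx, hy, add_zero]
  · intro c x _ hx
    rw [map_smul, hx, smul_zero]
  · intro x y _ _ _ _
    obtain ⟨a, rfl⟩ := Submodule.Quotient.mk_surjective (IdBC n).toSubmodule x
    obtain ⟨b, rfl⟩ := Submodule.Quotient.mk_surjective (IdBC n).toSubmodule y
    show psiA n (LieSubmodule.Quotient.mk (N := IdBC n) ⁅a, b⁆) = 0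
    rw [psi_mk, phi_lie]

lemma part2 : hSpan n ⊓ (gPlus n).toSubmodule = ⊥ := by
  rw [eq_bot_iff]
  rintro v ⟨hv1, hv2⟩
  obtain ⟨c, hc⟩ := (Submodule.mem_span_range_iff_exists_fun ℂ).mp hv1
  have h0 : psiA n v = 0 := psi_gPlus v hv2
  have hcz : ∀ j, c j = 0 := by
    intro j
    have h1 := congrFun h0 j
    rw [← hc, map_sum] at h1
    simpa [map_smul, psi_h, Pi.single_apply] using h1
  rw [Submodule.mem_bot, ← hc]
  apply Finset.sum_eq_zero
  intro i _
  rw [hcz i, zero_smul]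

end Aux4
/-- 𝔤 = 𝔥 ⊕ 𝔤⁺ and 𝔤⁺ = 𝔤⁺_B + 𝔤⁺_C; in particular
[𝔤⁺_B, x'_N] ⊆ 𝔤⁺_B + 𝔤⁺_C and [𝔤⁺_C, x_N] ⊆ 𝔤⁺_B + 𝔤⁺_C. -/
theorem stmt_9 (n : ℕ) :
    hSpan n ⊔ (gPlus n).toSubmodule = ⊤ ∧
    hSpan n ⊓ (gPlus n).toSubmodule = ⊥ ∧
    (gPlus n).toSubmodule = (gPlusB n).toSubmodule ⊔ (gPlusC n).toSubmodule ∧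
    (∀ y ∈ gPlusB n,
      ⁅y, xg' n⁆ ∈ (gPlusB n).toSubmodule ⊔ (gPlusC n).toSubmodule) ∧
    (∀ y ∈ gPlusC n,
      ⁅y, xg (⟨n + 1, by omega⟩ : Fin (n + 2))⁆ ∈
        (gPlusB n).toSubmodule ⊔ (gPlusC n).toSubmodule) := by
  refine ⟨part1, part2, part3, ?_, ?_⟩
  · intro y hy
    have h1 : (⁅y, xg' n⁆ : gBC n) ∈ (gPlus n).toSubmodule :=
      (gPlus n).lie_mem (gPlusB_le_gPlus hy) (LieSubalgebra.subset_lieSpan (Or.inr rfl))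
    rw [part3] at h1
    exact h1
  · intro y hy
    have h1 : (⁅y, xg (⟨n + 1, by omega⟩ : Fin (n + 2))⁆ : gBC n) ∈ (gPlus n).toSubmodule :=
      (gPlus n).lie_mem (gPlusC_le_gPlus hy)
        (LieSubalgebra.subset_lieSpan (Or.inl ⟨⟨n + 1, by omega⟩, rfl⟩))
    rw [part3] at h1
    exact h1
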